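/- The non-unital algebra U̇₀ = ⊕_{α∈Φ₊} 𝔹(α) ⊗ 𝔹(−α) (inside 𝔹^∨) is generated as an algebra by the elements ẽ_{α,i} = Σ_{b∈B(α)} (ẽᵢb ⊗ b^∨)^ and f̃_{α,i} = Σ_{b∈B(α)} (f̃ᵢb ⊗ b^∨)^ together with the idempotents 1_α = Σ_{b∈B(α)} (b ⊗ b^∨)^; in particular (b_α ⊗ b_α^∨)^ = Π_{i∈I} (1_α − f̃_{α,i} ẽ_{α,i}) where b_α is the highest weight element, and any basis functional (b ⊗ b'^∨)^ with b = f̃_{i₁}…f̃_{iₙ} b_α, b' = f̃_{j₁}…f̃_{jₘ} b_α equals f̃_{α,i₁}…f̃_{α,iₙ} (Π_{i}(1_α − f̃_{α,i} ẽ_{α,i})) ẽ_{α,j₁}…ẽ_{α,jₘ}. -/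

import Mathlib

section

/- Crystal data of the irreducible highest weight crystals `B(α)` with Kashiwara
operators `eOp i`, `fOp i` and highest weight elements `bA α ∈ B(α)`. -/
variable {Φp ι : Type} [DecidableEq Φp] (B : Φp → Type)
  [∀ α, Fintype (B α)] [∀ α, DecidableEq (B α)]
  (eOp fOp : ι → (α : Φp) → B α → Option (B α))
  (bA : (α : Φp) → B α)

/-- The basis of `𝔹`: elements `(b ⊗ b'^∨)` with `b, b' ∈ B(α)`. -/
def P : Type _ := Σ α : Φp, B α × B α

/-- `U̇₀ = ⊕_{α∈Φ₊} 𝔹(α) ⊗ 𝔹(−α)` (finitely supported formal sums of basis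
functionals `(b ⊗ b'^∨)^`). -/
abbrev UD : Type _ := P B →₀ ℤ

/-- Product of two basis functionals:
`(b ⊗ d^∨)^ · (d ⊗ b')^ = (b ⊗ b')^` within the same `α`-block, else `0`. -/
noncomputable def pairMulF (x y : P B) : UD B :=
  if h : x.1 = y.1 then
    (if (h ▸ x.2.2 : B y.1) = y.2.1 then
      Finsupp.single (⟨y.1, ((h ▸ x.2.1 : B y.1), y.2.2)⟩ : P B) 1 else 0)
  else 0

/-- The multiplication of `U̇₀`. -/
noncomputable def mulU (u v : UD B) : UD B :=
  u.sum fun x a => v.sum fun y c => (a * c) • pairMulF B x y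

/-- The local units `1_α = Σ_{b∈B(α)} (b ⊗ b^∨)^`. -/
noncomputable def oneA (α : Φp) : UD B := ∑ b : B α, Finsupp.single (⟨α, (b, b)⟩ : P B) 1

/-- `ẽ_{α,i} = Σ_{b∈B(α)} (ẽᵢ b ⊗ b^∨)^`. -/
noncomputable def eGen (α : Φp) (i : ι) : UD B :=
  ∑ b : B α, (eOp i α b).elim 0 (fun c => Finsupp.single (⟨α, (c, b)⟩ : P B) 1)

/-- `f̃_{α,i} = Σ_{b∈B(α)} (f̃ᵢ b ⊗ b^∨)^`. -/
noncomputable def fGen (α : Φp) (i : ι) : UD B :=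
  ∑ b : B α, (fOp i α b).elim 0 (fun c => Finsupp.single (⟨α, (c, b)⟩ : P B) 1)

/-- `f̃`-words applied with the rightmost letter first, so that
`wordR [i₁,…,iₙ] b = f̃_{i₁}(f̃_{i₂}(⋯ f̃_{iₙ}(b)))`. -/
def wordR (α : Φp) (l : List ι) (b : B α) : Option (B α) :=
  l.foldr (fun i ob => ob.bind (fOp i α)) (some b)

/-- `f̃`-words applied with the leftmost letter first. -/
def wordL (α : Φp) (l : List ι) (b : B α) : Option (B α) :=
  l.foldl (fun ob i => ob.bind (fOp i α)) (some b)

set_option linter.unusedSectionVars false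

-- basic lemmas
lemma zero_mulU (v : UD B) : mulU B 0 v = 0 := by simp [mulU]

lemma mulU_zero (u : UD B) : mulU B u 0 = 0 := by simp [mulU]

lemma add_mulU (u u' v : UD B) : mulU B (u + u') v = mulU B u v + mulU B u' v := by
  unfold mulU
  rw [Finsupp.sum_add_index']
  · intro x; simp
  · intro x a a'; simp [add_mul, add_smul, Finsupp.sum_add]

lemma mulU_add (u v v' : UD B) : mulU B u (v + v') = mulU B u v + mulU B u v' := by
  unfold mulU
  rw [← Finsupp.sum_add]
  apply Finsupp.sum_congr
  intro x _
  rw [Finsupp.sum_add_index']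
  · intro y; simp
  · intro y c c'; simp [mul_add, add_smul]

lemma sum_mulU {γ : Type} (s : Finset γ) (f : γ → UD B) (v : UD B) :
    mulU B (∑ g ∈ s, f g) v = ∑ g ∈ s, mulU B (f g) v := by
  classical
  induction s using Finset.cons_induction with
  | empty => simp [zero_mulU]
  | cons a s ha ih => rw [Finset.sum_cons, Finset.sum_cons, add_mulU, ih]

lemma mulU_sum {γ : Type} (u : UD B) (s : Finset γ) (f : γ → UD B) :
    mulU B u (∑ g ∈ s, f g) = ∑ g ∈ s, mulU B u (f g) := by
  classical
  induction s using Finset.cons_induction with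
  | empty => simp [mulU_zero]
  | cons a s ha ih => rw [Finset.sum_cons, Finset.sum_cons, mulU_add, ih]

lemma single_mulU_single (α : Φp) (b d d' b' : B α) :
    mulU B (Finsupp.single (⟨α, (b, d)⟩ : P B) 1) (Finsupp.single (⟨α, (d', b')⟩ : P B) 1)
      = if d = d' then Finsupp.single (⟨α, (b, b')⟩ : P B) 1 else 0 := by
  unfold mulU
  erw [Finsupp.sum_single_index, Finsupp.sum_single_index]
  · rw [one_mul, one_smul]; unfold pairMulF; exact dif_pos rfl
  · simp
  · simp [Finsupp.sum_single_index]
lemma gen_mulU_single (g : ι → (α : Φp) → B α → Option (B α)) (α : Φp) (i : ι) (c b' : B α) :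
    mulU B (∑ b : B α, (g i α b).elim 0 (fun d => Finsupp.single (⟨α, (d, b)⟩ : P B) 1))
      (Finsupp.single (⟨α, (c, b')⟩ : P B) 1)
      = (g i α c).elim 0 (fun d => Finsupp.single (⟨α, (d, b')⟩ : P B) 1) := by
  rw [sum_mulU, Finset.sum_eq_single c]
  · cases h : g i α c with
    | none => simp [h, zero_mulU]; rfl
    | some d => simp [h, single_mulU_single]; rfl
  · intro b _ hb
    cases h : g i α b with
    | none => simp [h, zero_mulU]
    | some d => simp [h, single_mulU_single, hb]; rfl
  · simp

lemma eGen_mulU_single (α : Φp) (i : ι) (c b' : B α) :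
    mulU B (eGen B eOp α i) (Finsupp.single (⟨α, (c, b')⟩ : P B) 1)
      = (eOp i α c).elim 0 (fun d => Finsupp.single (⟨α, (d, b')⟩ : P B) 1) := by
  unfold eGen; exact gen_mulU_single B eOp α i c b'

lemma fGen_mulU_single (α : Φp) (i : ι) (c b' : B α) :
    mulU B (fGen B fOp α i) (Finsupp.single (⟨α, (c, b')⟩ : P B) 1)
      = (fOp i α c).elim 0 (fun d => Finsupp.single (⟨α, (d, b')⟩ : P B) 1) := by
  unfold fGen; exact gen_mulU_single B fOp α i c b'
noncomputable def Dg (α : Φp) (s : Finset (B α)) : UD B :=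
  ∑ b ∈ s, Finsupp.single (⟨α, (b, b)⟩ : P B) 1

lemma Dg_mulU_Dg (α : Φp) (s t : Finset (B α)) :
    mulU B (Dg B α s) (Dg B α t) = Dg B α (s ∩ t) := by
  unfold Dg
  rw [sum_mulU]
  have : ∀ b : B α, mulU B (Finsupp.single (⟨α, (b, b)⟩ : P B) 1)
      (∑ d ∈ t, Finsupp.single (⟨α, (d, d)⟩ : P B) 1)
      = if b ∈ t then Finsupp.single (⟨α, (b, b)⟩ : P B) 1 else 0 := by
    intro b
    rw [mulU_sum]
    rw [show (∑ d ∈ t, mulU B (Finsupp.single (⟨α, (b, b)⟩ : P B) 1)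
        (Finsupp.single (⟨α, (d, d)⟩ : P B) 1))
      = ∑ d ∈ t, if b = d then Finsupp.single (⟨α, (b, d)⟩ : P B) 1 else 0 from
      Finset.sum_congr rfl fun d _ => single_mulU_single B α b b d d]
    rw [Finset.sum_ite_eq]
  rw [Finset.sum_congr rfl fun b _ => this b]
  erw [Finset.sum_ite_mem]; rfl

lemma oneA_eq_Dg (α : Φp) : oneA B α = Dg B α Finset.univ := rfl
lemma proj_eq (hEF : ∀ (i : ι) (α : Φp) (b c : B α), fOp i α b = some c ↔ eOp i α c = some b)
    (α : Φp) (i : ι) :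
    oneA B α - mulU B (fGen B fOp α i) (eGen B eOp α i)
      = Dg B α (Finset.univ.filter fun b => eOp i α b = none) := by
  have h1 : mulU B (fGen B fOp α i) (eGen B eOp α i)
      = Dg B α (Finset.univ.filter fun b => ¬ eOp i α b = none) := by
    rw [show eGen B eOp α i = ∑ b : B α, (eOp i α b).elim 0
        (fun c => Finsupp.single (⟨α, (c, b)⟩ : P B) 1) from rfl]
    erw [mulU_sum, Dg, Finset.sum_filter]
    apply Finset.sum_congr rfl
    intro b _
    cases h : eOp i α b with
    | none => simp [h]; exact mulU_zero B _
    | some c =>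
      have hf : fOp i α c = some b := (hEF i α c b).mpr h
      simp only [Option.elim]
      erw [fGen_mulU_single]
      simp [h, hf]; rfl
  rw [h1, oneA_eq_Dg]
  have := Finset.sum_filter_add_sum_filter_not Finset.univ
    (fun b => eOp i α b = none) (fun b => Finsupp.single (⟨α, (b, b)⟩ : P B) (1 : ℤ))
  unfold Dg
  erw [← this]
  exact add_sub_cancel_right _ _

lemma foldl_Dg (α : Φp) (l : List ι) (s : Finset (B α)) :
    (l.map (fun i => Dg B α (Finset.univ.filter fun b => eOp i α b = none))).foldl
        (mulU B) (Dg B α s)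
      = Dg B α (s.filter fun b => ∀ i ∈ l, eOp i α b = none) := by
  induction l generalizing s with
  | nil => simp
  | cons i t ih =>
    simp only [List.map_cons, List.foldl_cons]
    rw [Dg_mulU_Dg, ih]
    congr 1
    ext b
    simp only [Finset.mem_filter, Finset.mem_inter, Finset.mem_univ, List.mem_cons, true_and]
    constructor
    · rintro ⟨⟨hs, hi⟩, ht⟩
      exact ⟨hs, fun j hj => hj.elim (fun e => e ▸ hi) (ht j)⟩
    · rintro ⟨hs, h⟩
      exact ⟨⟨hs, h i (Or.inl rfl)⟩, fun j hj => h j (Or.inr hj)⟩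

lemma part1_aux (hEF : ∀ (i : ι) (α : Φp) (b c : B α), fOp i α b = some c ↔ eOp i α c = some b)
    (hHigh : ∀ (α : Φp) (b : B α), (∀ i, eOp i α b = none) ↔ b = bA α)
    (α : Φp) (l : List ι) (hall : ∀ i : ι, i ∈ l) :
    (l.map (fun i => oneA B α - mulU B (fGen B fOp α i) (eGen B eOp α i))).foldl
        (mulU B) (oneA B α)
      = Finsupp.single (⟨α, (bA α, bA α)⟩ : P B) 1 := by
  rw [show (l.map (fun i => oneA B α - mulU B (fGen B fOp α i) (eGen B eOp α i)))
      = l.map (fun i => Dg B α (Finset.univ.filter fun b => eOp i α b = none)) from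
    List.map_congr_left fun i _ => proj_eq B eOp fOp hEF α i]
  rw [oneA_eq_Dg, foldl_Dg]
  have hfil : (Finset.univ.filter fun b : B α => ∀ i ∈ l, eOp i α b = none) = {bA α} := by
    ext b
    simp only [Finset.mem_filter, Finset.mem_univ, true_and, Finset.mem_singleton]
    constructor
    · intro h; exact (hHigh α b).mp fun i => h i (hall i)
    · intro h i _; exact ((hHigh α b).mpr h) i
  rw [hfil]
  simp [Dg]; rfl
def ewordR (α : Φp) (l : List ι) (b : B α) : Option (B α) :=
  l.foldr (fun i ob => ob.bind (eOp i α)) (some b)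

lemma ewordR_cons (α : Φp) (i : ι) (t : List ι) (b : B α) :
    ewordR B eOp α (i :: t) b = (ewordR B eOp α t b).bind (eOp i α) := rfl

lemma wordR_cons (α : Φp) (i : ι) (t : List ι) (b : B α) :
    wordR B fOp α (i :: t) b = (wordR B fOp α t b).bind (fOp i α) := rfl

lemma wordL_none (α : Φp) (l : List ι) :
    l.foldl (fun ob i => ob.bind (fOp i α)) none = none := by
  induction l with
  | nil => rfl
  | cons i t ih => simpa using ih

lemma wordL_iff (hEF : ∀ (i : ι) (α : Φp) (b c : B α), fOp i α b = some c ↔ eOp i α c = some b)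
    (α : Φp) (l : List ι) (b c : B α) :
    wordL B fOp α l b = some c ↔ ewordR B eOp α l c = some b := by
  induction l generalizing b with
  | nil =>
    simp only [wordL, ewordR, List.foldl_nil, List.foldr_nil, Option.some.injEq]
    exact eq_comm
  | cons i t ih =>
    rw [ewordR_cons]
    cases hf : fOp i α b with
    | none =>
      have hL : wordL B fOp α (i :: t) b = none := by
        simp only [wordL, List.foldl_cons, Option.bind_some, hf]
        exact wordL_none B fOp α t
      rw [hL]
      constructor
      · intro h; exact absurd h (by simp)
      · intro h
        obtain ⟨d, hd, he⟩ := Option.bind_eq_some_iff.mp h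
        rw [(hEF i α b d).mpr he] at hf
        exact absurd hf (by simp)
    | some d =>
      have hL : wordL B fOp α (i :: t) b = wordL B fOp α t d := by
        simp only [wordL, List.foldl_cons, Option.bind_some, hf]
      rw [hL, ih d]
      constructor
      · intro h; rw [h, Option.bind_some]; exact (hEF i α b d).mp hf
      · intro h
        obtain ⟨d', hd', he⟩ := Option.bind_eq_some_iff.mp h
        obtain rfl : d = d' := Option.some.inj (hf.symm.trans ((hEF i α b d').mpr he))
        exact hd'

lemma efold (α : Φp) (l : List ι) :
    (l.map (eGen B eOp α)).foldr (mulU B) (oneA B α)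
      = ∑ b : B α, (ewordR B eOp α l b).elim 0
          (fun c => Finsupp.single (⟨α, (c, b)⟩ : P B) 1) := by
  induction l with
  | nil => simp [oneA, ewordR]; rfl
  | cons i t ih =>
    simp only [List.map_cons, List.foldr_cons, ih]
    erw [mulU_sum]
    apply Finset.sum_congr rfl
    intro b _
    rw [ewordR_cons]
    cases h : ewordR B eOp α t b with
    | none => simp; exact mulU_zero B _
    | some c =>
      simp only [Option.elim, Option.bind_some]
      exact eGen_mulU_single B eOp α i c b

lemma ffold (α : Φp) (l : List ι) (c b' : B α) :
    (l.map (fGen B fOp α)).foldr (mulU B)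
        (Finsupp.single (⟨α, (c, b')⟩ : P B) 1)
      = (wordR B fOp α l c).elim 0 (fun d => Finsupp.single (⟨α, (d, b')⟩ : P B) 1) := by
  induction l with
  | nil => simp [wordR]; rfl
  | cons i t ih =>
    simp only [List.map_cons, List.foldr_cons, ih]
    rw [wordR_cons]
    cases h : wordR B fOp α t c with
    | none => simp; exact mulU_zero B _
    | some d =>
      simp only [Option.elim, Option.bind_some]
      exact fGen_mulU_single B fOp α i d b'

lemma proj_mulU (hEF : ∀ (i : ι) (α : Φp) (b c : B α), fOp i α b = some c ↔ eOp i α c = some b)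
    (α : Φp) (l' : List ι) (b' : B α)
    (h' : wordL B fOp α l' (bA α) = some b') :
    mulU B (Finsupp.single (⟨α, (bA α, bA α)⟩ : P B) 1)
        ((l'.map (eGen B eOp α)).foldr (mulU B) (oneA B α))
      = Finsupp.single (⟨α, (bA α, b')⟩ : P B) 1 := by
  erw [efold B eOp α l', mulU_sum, Finset.sum_eq_single b']
  · rw [(wordL_iff B eOp fOp hEF α l' (bA α) b').mp h']
    simp only [Option.elim]
    erw [single_mulU_single]
    simp; rfl
  · intro b _ hb
    cases h : ewordR B eOp α l' b with
    | none => simp; exact mulU_zero B _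
    | some c =>
      simp only [Option.elim]
      erw [single_mulU_single]
      have hne : ¬ bA α = c := by
        intro e
        apply hb
        have : wordL B fOp α l' (bA α) = some b :=
          (wordL_iff B eOp fOp hEF α l' (bA α) b).mpr (e ▸ h)
        exact Option.some.inj (this.symm.trans h')
      simp [hne]; rfl
  · simp

lemma part2_aux (hEF : ∀ (i : ι) (α : Φp) (b c : B α), fOp i α b = some c ↔ eOp i α c = some b)
    (α : Φp) (l l' : List ι) (b b' : B α)
    (hb : wordR B fOp α l (bA α) = some b) (hb' : wordL B fOp α l' (bA α) = some b') :
    Finsupp.single (⟨α, (b, b')⟩ : P B) 1 =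
      (l.map (fGen B fOp α) ++ ([Finsupp.single (⟨α, (bA α, bA α)⟩ : P B) 1] : List (UD B))
          ++ l'.map (eGen B eOp α)).foldr (mulU B) (oneA B α) := by
  rw [List.foldr_append, List.foldr_append, List.foldr_cons, List.foldr_nil]
  rw [proj_mulU B eOp fOp bA hEF α l' b' hb']
  erw [ffold, hb]; rfl
/-- The non-unital algebra `U̇₀` is generated by the elements
`ẽ_{α,i}`, `f̃_{α,i}` and the idempotents `1_α`: the highest weight functional satisfies
`(b_α ⊗ b_α^∨)^ = Π_{i∈I} (1_α − f̃_{α,i} ẽ_{α,i})` (for any ordering of `I`), and every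
basis functional `(b ⊗ b'^∨)^` with `b, b'` given by `f̃`-words applied to `b_α` is the
corresponding product of the `f̃_{α,i}`, this projection, and the `ẽ_{α,j}`; hence every
basis functional is such a product.  (The hypotheses record that `f̃ᵢ` and `ẽᵢ` are
mutually inverse partial maps, that `b_α` is the unique element killed by all `ẽᵢ`, and
that `B(α)` is generated from `b_α` by the `f̃ᵢ`.) -/
theorem stmt19
    (hEF : ∀ (i : ι) (α : Φp) (b c : B α), fOp i α b = some c ↔ eOp i α c = some b)
    (hHigh : ∀ (α : Φp) (b : B α), (∀ i, eOp i α b = none) ↔ b = bA α)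
    (hConn : ∀ (α : Φp) (b : B α), ∃ l : List ι, wordR B fOp α l (bA α) = some b) :
    (∀ (α : Φp) (l : List ι), l.Nodup → (∀ i : ι, i ∈ l) →
      (l.map (fun i => oneA B α - mulU B (fGen B fOp α i) (eGen B eOp α i))).foldl
          (mulU B) (oneA B α)
        = Finsupp.single (⟨α, (bA α, bA α)⟩ : P B) 1) ∧
    (∀ (α : Φp) (l l' : List ι) (b b' : B α),
      wordR B fOp α l (bA α) = some b → wordL B fOp α l' (bA α) = some b' →
      Finsupp.single (⟨α, (b, b')⟩ : P B) 1 =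
        (l.map (fGen B fOp α) ++ ([Finsupp.single (⟨α, (bA α, bA α)⟩ : P B) 1] : List (UD B))
            ++ l'.map (eGen B eOp α)).foldr (mulU B) (oneA B α)) ∧
    (∀ x : P B, ∃ l l' : List ι,
      Finsupp.single x 1 =
        (l.map (fGen B fOp x.1) ++ ([Finsupp.single (⟨x.1, (bA x.1, bA x.1)⟩ : P B) 1] : List (UD B))
            ++ l'.map (eGen B eOp x.1)).foldr (mulU B) (oneA B x.1)) := by
  refine ⟨fun α l _ hall => part1_aux B eOp fOp bA hEF hHigh α l hall,
    fun α l l' b b' hb hb' => part2_aux B eOp fOp bA hEF α l l' b b' hb hb', ?_⟩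
  intro x
  obtain ⟨α, b, b'⟩ := x
  obtain ⟨l, hl⟩ := hConn α b
  obtain ⟨l0, hl0⟩ := hConn α b'
  refine ⟨l, l0.reverse, ?_⟩
  have hb' : wordL B fOp α l0.reverse (bA α) = some b' := by
    rw [wordL, List.foldl_reverse]
    exact hl0
  exact part2_aux B eOp fOp bA hEF α l l0.reverse b b' hl hb'


end
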